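/- Let Γ and Δ be countable graphs each having property (△) (every finite vertex set has a common neighbour) and property (∴) (every finite vertex set has a common non-neighbour). Then there exists a bijective homomorphism from Γ to Δ and a bijective homomorphism from Δ to Γ; i.e., Γ and Δ are equivalent up to bimorphisms. -/

import Mathlib

open List

section Aux

variable {V W : Type*} (Γ : SimpleGraph V) (Δ : SimpleGraph W)

/-- Invariant for our partial bimorphism, a list of matched pairs. -/
def GoodList (L : List (V × W)) : Prop :=
  (L.map Prod.fst).Nodup ∧ (L.map Prod.snd).Nodup ∧
    ∀ a ∈ L, ∀ b ∈ L, Γ.Adj a.1 b.1 → Δ.Adj a.2 b.2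

lemma goodList_nil : GoodList Γ Δ ([] : List (V × W)) := by
  refine ⟨by simp, by simp, by simp⟩

/-- There is a common non-neighbour avoiding any finite list. -/
lemma fresh_nonneighbour
    (hΓtri : ∀ U : Finset V, ∃ u : V, ∀ x ∈ U, Γ.Adj u x)
    (hΓther : ∀ U : Finset V, ∃ v : V, ∀ x ∈ U, ¬Γ.Adj v x)
    (l : List V) : ∃ v : V, v ∉ l ∧ ∀ x ∈ l, ¬Γ.Adj v x := by
  classical
  obtain ⟨u, hu⟩ := hΓtri l.toFinset
  obtain ⟨v, hv⟩ := hΓther (insert u l.toFinset)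
  refine ⟨v, ?_, ?_⟩
  · intro hmem
    exact hv u (Finset.mem_insert_self _ _) ((hu v (by simpa using hmem)).symm)
  · intro x hx
    exact hv x (Finset.mem_insert_of_mem (by simpa using hx))

/-- Extend a good list by a fresh left vertex. -/
lemma goodList_extend_left
    (hΔtri : ∀ U : Finset W, ∃ u : W, ∀ x ∈ U, Δ.Adj u x)
    {L : List (V × W)} (hG : GoodList Γ Δ L) {v : V}
    (hv : v ∉ L.map Prod.fst) :
    ∃ w : W, GoodList Γ Δ (L ++ [(v, w)]) := by
  classical
  obtain ⟨w, hw⟩ := hΔtri (L.map Prod.snd).toFinset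
  have hwadj : ∀ x ∈ L.map Prod.snd, Δ.Adj w x := fun x hx => hw x (by simpa using hx)
  have hwfresh : w ∉ L.map Prod.snd := fun hmem => (Δ.irrefl (hwadj w hmem))
  obtain ⟨h1, h2, h3⟩ := hG
  refine ⟨w, ?_, ?_, ?_⟩
  · simp [List.nodup_append, h1]
    exact fun a x h e => hv (List.mem_map.mpr ⟨(a, x), h, e⟩)
  · simp [List.nodup_append, h2]
    exact fun a x h e => hwfresh (List.mem_map.mpr ⟨(x, a), h, e⟩)
  · intro a ha b hb hab
    simp only [List.mem_append, List.mem_singleton] at ha hb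
    rcases ha with ha | rfl
    · rcases hb with hb | rfl
      · exact h3 a ha b hb hab
      · exact (hwadj a.2 (List.mem_map_of_mem ha)).symm
    · rcases hb with hb | rfl
      · exact hwadj b.2 (List.mem_map_of_mem hb)
      · exact absurd hab (Γ.irrefl)

/-- Extend a good list by a fresh right vertex. -/
lemma goodList_extend_right
    (hΓtri : ∀ U : Finset V, ∃ u : V, ∀ x ∈ U, Γ.Adj u x)
    (hΓther : ∀ U : Finset V, ∃ v : V, ∀ x ∈ U, ¬Γ.Adj v x)
    {L : List (V × W)} (hG : GoodList Γ Δ L) {w : W}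
    (hw : w ∉ L.map Prod.snd) :
    ∃ v : V, GoodList Γ Δ (L ++ [(v, w)]) := by
  classical
  obtain ⟨v, hvfresh, hvnonadj⟩ := fresh_nonneighbour Γ hΓtri hΓther (L.map Prod.fst)
  obtain ⟨h1, h2, h3⟩ := hG
  refine ⟨v, ?_, ?_, ?_⟩
  · simp [List.nodup_append, h1]
    exact fun a x h e => hvfresh (List.mem_map.mpr ⟨(a, x), h, e⟩)
  · simp [List.nodup_append, h2]
    exact fun a x h e => hw (List.mem_map.mpr ⟨(x, a), h, e⟩)
  · intro a ha b hb hab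
    simp only [List.mem_append, List.mem_singleton] at ha hb
    rcases ha with ha | rfl
    · rcases hb with hb | rfl
      · exact h3 a ha b hb hab
      · exact absurd hab.symm (hvnonadj a.1 (List.mem_map_of_mem ha))
    · rcases hb with hb | rfl
      · exact absurd hab (hvnonadj b.1 (List.mem_map_of_mem hb))
      · exact absurd hab (Γ.irrefl)

/-- One step: extend a good list so that it mentions a given `v` and `w`. -/
lemma goodList_step
    (hΓtri : ∀ U : Finset V, ∃ u : V, ∀ x ∈ U, Γ.Adj u x)
    (hΓther : ∀ U : Finset V, ∃ v : V, ∀ x ∈ U, ¬Γ.Adj v x)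
    (hΔtri : ∀ U : Finset W, ∃ u : W, ∀ x ∈ U, Δ.Adj u x)
    (L : List (V × W)) (hG : GoodList Γ Δ L) (v : V) (w : W) :
    ∃ L' : List (V × W), GoodList Γ Δ L' ∧ L ⊆ L' ∧
      v ∈ L'.map Prod.fst ∧ w ∈ L'.map Prod.snd := by
  classical
  -- first handle v
  obtain ⟨L1, hG1, hsub1, hv1⟩ :
      ∃ L1 : List (V × W), GoodList Γ Δ L1 ∧ L ⊆ L1 ∧ v ∈ L1.map Prod.fst := by
    by_cases hv : v ∈ L.map Prod.fst
    · exact ⟨L, hG, List.Subset.refl _, hv⟩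
    · obtain ⟨w1, hG1⟩ := goodList_extend_left Γ Δ hΔtri hG hv
      exact ⟨L ++ [(v, w1)], hG1, List.subset_append_left _ _, by simp⟩
  -- then handle w
  by_cases hw : w ∈ L1.map Prod.snd
  · exact ⟨L1, hG1, hsub1, hv1, hw⟩
  · obtain ⟨v1, hG2⟩ := goodList_extend_right Γ Δ hΓtri hΓther hG1 hw
    refine ⟨L1 ++ [(v1, w)], hG2, List.Subset.trans hsub1 (List.subset_append_left _ _), ?_, by simp⟩
    simpa using Or.inl hv1

/-- The key lemma: a bijective homomorphism in one direction. -/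
lemma key_bimorphism [Countable V] [Infinite V] [Countable W] [Infinite W]
    (hΓtri : ∀ U : Finset V, ∃ u : V, ∀ x ∈ U, Γ.Adj u x)
    (hΓther : ∀ U : Finset V, ∃ v : V, ∀ x ∈ U, ¬Γ.Adj v x)
    (hΔtri : ∀ U : Finset W, ∃ u : W, ∀ x ∈ U, Δ.Adj u x) :
    ∃ α : V ≃ W, ∀ u v, Γ.Adj u v → Δ.Adj (α u) (α v) := by
  classical
  obtain ⟨eV⟩ : Nonempty (V ≃ ℕ) := nonempty_equiv_of_countable
  obtain ⟨eW⟩ : Nonempty (W ≃ ℕ) := nonempty_equiv_of_countable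
  have hstep := goodList_step Γ Δ hΓtri hΓther hΔtri
  choose f hf1 hf2 hf3 hf4 using hstep
  -- the increasing chain of good lists
  let chain : ℕ → {L : List (V × W) // GoodList Γ Δ L} := fun n =>
    Nat.rec ⟨[], goodList_nil Γ Δ⟩
      (fun n p => ⟨f p.1 p.2 (eV.symm n) (eW.symm n),
        hf1 p.1 p.2 (eV.symm n) (eW.symm n)⟩) n
  have chain_succ : ∀ n, (chain (n + 1)).1 =
      f (chain n).1 (chain n).2 (eV.symm n) (eW.symm n) := fun n => rfl
  have hmono : ∀ m n, m ≤ n → (chain m).1 ⊆ (chain n).1 := by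
    intro m n hmn
    induction n with
    | zero => rw [Nat.le_zero.mp hmn]; exact List.Subset.refl _
    | succ n ih =>
      rcases Nat.lt_or_ge m (n + 1) with h | h
      · exact List.Subset.trans (ih (Nat.lt_succ_iff.mp h))
          (by rw [chain_succ]; exact hf2 (chain n).1 (chain n).2 _ _)
      · have : m = n + 1 := le_antisymm hmn h
        subst this; exact List.Subset.refl _
  -- every v appears, every w appears
  have hmemV : ∀ v : V, ∃ w, (v, w) ∈ (chain (eV v + 1)).1 := by
    intro v
    have := hf3 (chain (eV v)).1 (chain (eV v)).2 (eV.symm (eV v)) (eW.symm (eV v))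
    rw [← chain_succ, Equiv.symm_apply_apply] at this
    obtain ⟨a, ha, ha2⟩ := List.mem_map.mp this
    exact ⟨a.2, by rwa [show ((v : V), a.2) = a from Prod.ext ha2.symm rfl]⟩
  have hmemW : ∀ w : W, ∃ v, (v, w) ∈ (chain (eW w + 1)).1 := by
    intro w
    have := hf4 (chain (eW w)).1 (chain (eW w)).2 (eV.symm (eW w)) (eW.symm (eW w))
    rw [← chain_succ, Equiv.symm_apply_apply] at this
    obtain ⟨a, ha, ha2⟩ := List.mem_map.mp this
    exact ⟨a.1, by rwa [show (a.1, (w : W)) = a from Prod.ext rfl ha2.symm]⟩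
  -- uniqueness of matched partners
  have huniq : ∀ (a b : V × W), (∃ m, a ∈ (chain m).1) → (∃ n, b ∈ (chain n).1) →
      (a.1 = b.1 → a = b) ∧ (a.2 = b.2 → a = b) := by
    rintro a b ⟨m, hm⟩ ⟨n, hn⟩
    have hma : a ∈ (chain (max m n)).1 := hmono m _ (le_max_left _ _) hm
    have hnb : b ∈ (chain (max m n)).1 := hmono n _ (le_max_right _ _) hn
    obtain ⟨h1, h2, _⟩ := (chain (max m n)).2
    exact ⟨fun h => List.inj_on_of_nodup_map h1 hma hnb h,
      fun h => List.inj_on_of_nodup_map h2 hma hnb h⟩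
  -- the function
  have hex : ∀ v : V, ∃ w : W, ∃ n, (v, w) ∈ (chain n).1 := fun v =>
    (hmemV v).elim fun w hw => ⟨w, eV v + 1, hw⟩
  choose F hF using hex
  have hFinj : Function.Injective F := by
    intro v v' h
    have := (huniq (v, F v) (v', F v') (hF v) (hF v')).2 h
    exact congrArg Prod.fst this
  have hFsurj : Function.Surjective F := by
    intro w
    obtain ⟨v, hv⟩ := hmemW w
    refine ⟨v, ?_⟩
    have := (huniq (v, F v) (v, w) (hF v) ⟨eW w + 1, hv⟩).1 rfl
    exact (congrArg Prod.snd this)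
  refine ⟨Equiv.ofBijective F ⟨hFinj, hFsurj⟩, ?_⟩
  intro u v huv
  obtain ⟨m, hm⟩ := hF u
  obtain ⟨n, hn⟩ := hF v
  have hma : (u, F u) ∈ (chain (max m n)).1 := hmono m _ (le_max_left _ _) hm
  have hnb : (v, F v) ∈ (chain (max m n)).1 := hmono n _ (le_max_right _ _) hn
  obtain ⟨_, _, h3⟩ := (chain (max m n)).2
  exact h3 _ hma _ hnb huv

end Aux

/-- Two countable graphs each having property (△) (every finite vertex set has a
common neighbour) and property (∴) (every finite vertex set has a common
non-neighbour) are equivalent up to bimorphisms: there are bijective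
homomorphisms in both directions. -/
theorem stmt_14 {V W : Type*} [Countable V] [Infinite V] [Countable W] [Infinite W]
    (Γ : SimpleGraph V) (Δ : SimpleGraph W)
    (hΓtri : ∀ U : Finset V, ∃ u : V, ∀ x ∈ U, Γ.Adj u x)
    (hΓther : ∀ U : Finset V, ∃ v : V, ∀ x ∈ U, ¬Γ.Adj v x)
    (hΔtri : ∀ U : Finset W, ∃ u : W, ∀ x ∈ U, Δ.Adj u x)
    (hΔther : ∀ U : Finset W, ∃ v : W, ∀ x ∈ U, ¬Δ.Adj v x) :
    (∃ α : V ≃ W, ∀ u v, Γ.Adj u v → Δ.Adj (α u) (α v)) ∧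
    (∃ β : W ≃ V, ∀ u v, Δ.Adj u v → Γ.Adj (β u) (β v)) := by
  exact ⟨key_bimorphism Γ Δ hΓtri hΓther hΔtri,
    key_bimorphism Δ Γ hΔtri hΔther hΓtri⟩
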